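/- Let d ≥ 1 and let {Π_i}_{i=1}^{d²} be d×d complex matrices such that each Π_i is a Hermitian projection (Π_i² = Π_i = Π_i†) of trace 1, with tr(Π_iΠ_j) = (dδ_{ij} + 1)/(d+1) for all i, j, and Σ_i Π_i = d·I. Define F_j := (√(d+1)/d)·Π_j + ((1 − √(d+1))/d²)·I. Then {F_j} is an unbiased Wigner basis: each F_j is Hermitian, Σ_j F_j = I, tr F_j = 1/d, and tr(F_iF_j) = (1/d)·δ_{ij} (in particular the family is linearly independent). -/

import Mathlib

open Matrix BigOperators
open scoped ComplexOrder Kronecker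

/-- A measure basis: a linearly independent family of `d²` Hermitian `d×d` complex
matrices summing to the identity, with nonnegative traces. -/
def IsMeasureBasis {d : ℕ} (L : Fin (d ^ 2) → Matrix (Fin d) (Fin d) ℂ) : Prop :=
  (∀ i, (L i).IsHermitian) ∧ LinearIndependent ℝ L ∧ (∑ i, L i) = 1 ∧ ∀ i, 0 ≤ ((L i).trace).re

/-- A Wigner basis: an orthogonal measure basis. -/
def IsWignerBasis {d : ℕ} (L : Fin (d ^ 2) → Matrix (Fin d) (Fin d) ℂ) : Prop :=
  IsMeasureBasis L ∧ ∀ i j, i ≠ j → (L i * L j).trace = 0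

/-- The rescaled frame operator `S_L(X) = ∑ⱼ (tr(X Lⱼ)/lⱼ) Lⱼ`. -/
noncomputable def rsFrameOp {n : Type*} [Fintype n] {m : Type*} [Fintype m] [DecidableEq m]
    (L : n → Matrix m m ℂ) (X : Matrix m m ℂ) : Matrix m m ℂ :=
  ∑ j, (((X * L j).trace) / ((L j).trace)) • L j

/-- A map on matrices that is ℝ-linear, Hermiticity-preserving, self-adjoint with respect to
the Hilbert–Schmidt inner product on Hermitian matrices, and positive. -/
def IsPosSelfAdjMap {m : Type*} [Fintype m]
    (T : Matrix m m ℂ → Matrix m m ℂ) : Prop :=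
  IsLinearMap ℝ T ∧ (∀ X, X.IsHermitian → (T X).IsHermitian) ∧
  (∀ X Y, X.IsHermitian → Y.IsHermitian → (T X * Y).trace = (X * T Y).trace) ∧
  (∀ X, X.IsHermitian → 0 ≤ ((X * T X).trace).re)

/-- `T` is the (unique) positive self-adjoint inverse square root of the rescaled frame
operator of `L`, i.e. `S_L ∘ T ∘ T = id` on Hermitian matrices; `PW(L) i = T (L i)`. -/
def IsInvSqrtOfFrameOp {n : Type*} [Fintype n] {m : Type*} [Fintype m] [DecidableEq m]
    (L : n → Matrix m m ℂ) (T : Matrix m m ℂ → Matrix m m ℂ) : Prop :=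
  IsPosSelfAdjMap T ∧ ∀ X : Matrix m m ℂ, X.IsHermitian → rsFrameOp L (T (T X)) = X

/-- from a SIC (rank-1 Hermitian projections `Πᵢ` of trace 1 with
`tr(ΠᵢΠⱼ) = (dδᵢⱼ+1)/(d+1)` and `∑ᵢΠᵢ = d·I`), the operators
`Fⱼ = (√(d+1)/d)Πⱼ + ((1−√(d+1))/d²)I` form an unbiased Wigner basis. -/
theorem sic_principal_wigner_basis {d : ℕ} [NeZero d]
    (P : Fin (d ^ 2) → Matrix (Fin d) (Fin d) ℂ)
    (hPproj : ∀ i, P i * P i = P i) (hPherm : ∀ i, (P i).IsHermitian)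
    (hPtr : ∀ i, (P i).trace = 1)
    (hPgram : ∀ i j, (P i * P j).trace =
      (((((d : ℝ) * (if i = j then 1 else 0) + 1) / ((d : ℝ) + 1)) : ℝ) : ℂ))
    (hPsum : ∑ i, P i = (d : ℂ) • (1 : Matrix (Fin d) (Fin d) ℂ))
    (F : Fin (d ^ 2) → Matrix (Fin d) (Fin d) ℂ)
    (hFdef : ∀ j, F j = ((Real.sqrt ((d : ℝ) + 1) / (d : ℝ)) : ℝ) • P j +
      (((1 - Real.sqrt ((d : ℝ) + 1)) / (d : ℝ) ^ 2) : ℝ) • (1 : Matrix (Fin d) (Fin d) ℂ)) :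
    (∀ j, (F j).IsHermitian) ∧
    (∑ j, F j) = 1 ∧
    (∀ j, (F j).trace = ((d : ℂ))⁻¹) ∧
    (∀ i j, (F i * F j).trace = if i = j then ((d : ℂ))⁻¹ else 0) ∧
    LinearIndependent ℝ F := by
  have hdR : ((d:ℝ)) ≠ 0 := Nat.cast_ne_zero.mpr (NeZero.ne d)
  have hdC : ((d:ℂ)) ≠ 0 := Nat.cast_ne_zero.mpr (NeZero.ne d)
  set s : ℝ := Real.sqrt ((d:ℝ)+1) with hs
  have hs2 : s^2 = (d:ℝ)+1 := Real.sq_sqrt (by positivity)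
  clear_value s
  clear hs
  have hd1 : (d:ℝ)+1 ≠ 0 := by positivity
  -- Hermitian
  have hH : ∀ j, (F j).IsHermitian := by
    intro j
    rw [hFdef]
    unfold Matrix.IsHermitian
    rw [Matrix.conjTranspose_add, Matrix.conjTranspose_smul, Matrix.conjTranspose_smul,
      (hPherm j).eq, Matrix.conjTranspose_one]
    norm_num
  -- trace of each F j
  have htr : ∀ j, (F j).trace = ((d:ℂ))⁻¹ := by
    intro j
    rw [hFdef]
    rw [Matrix.trace_add, Matrix.trace_smul, Matrix.trace_smul, hPtr, Matrix.trace_one]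
    simp only [Finset.card_univ, Fintype.card_fin, smul_eq_mul, Complex.real_smul, mul_one]
    rw [show ((d:ℂ))⁻¹ = (((1:ℝ)/(d:ℝ) : ℝ) : ℂ) by push_cast; ring]
    push_cast
    field_simp
    ring
  -- gram
  have hgram : ∀ i j, (F i * F j).trace = if i = j then ((d:ℂ))⁻¹ else 0 := by
    intro i j
    rw [hFdef i, hFdef j]
    rw [add_mul, mul_add, mul_add]
    simp only [Matrix.smul_mul, Matrix.mul_smul, Matrix.one_mul, Matrix.mul_one,
      Matrix.trace_add, Matrix.trace_smul, smul_smul]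
    rw [hPgram, hPtr, hPtr, Matrix.trace_one]
    simp only [Finset.card_univ, Fintype.card_fin, smul_eq_mul, Complex.real_smul, mul_one]
    by_cases h : i = j
    · simp only [h, if_true]
      push_cast
      have key : (s/(d:ℝ)*(s/(d:ℝ))) * (((d:ℝ)*1+1)/((d:ℝ)+1))
          + ((1-s)/(d:ℝ)^2*(s/(d:ℝ)))
          + (s/(d:ℝ)*((1-s)/(d:ℝ)^2) + (1-s)/(d:ℝ)^2*((1-s)/(d:ℝ)^2)*(d:ℝ))
          = ((d:ℝ))⁻¹ := by
        field_simp
        ring_nf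
        rw [hs2]
        ring
      calc _ = ((((s/(d:ℝ)*(s/(d:ℝ))) * (((d:ℝ)*1+1)/((d:ℝ)+1))
          + ((1-s)/(d:ℝ)^2*(s/(d:ℝ)))
          + (s/(d:ℝ)*((1-s)/(d:ℝ)^2) + (1-s)/(d:ℝ)^2*((1-s)/(d:ℝ)^2)*(d:ℝ)) : ℝ)) : ℂ) := by
            push_cast; ring
        _ = ((d:ℂ))⁻¹ := by rw [key]; push_cast; ring
    · simp only [h, if_false]
      push_cast
      have key : (s/(d:ℝ)*(s/(d:ℝ))) * (((d:ℝ)*0+1)/((d:ℝ)+1))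
          + ((1-s)/(d:ℝ)^2*(s/(d:ℝ)))
          + (s/(d:ℝ)*((1-s)/(d:ℝ)^2) + (1-s)/(d:ℝ)^2*((1-s)/(d:ℝ)^2)*(d:ℝ))
          = 0 := by
        field_simp
        ring_nf
        rw [hs2]
        ring
      calc _ = ((((s/(d:ℝ)*(s/(d:ℝ))) * (((d:ℝ)*0+1)/((d:ℝ)+1))
          + ((1-s)/(d:ℝ)^2*(s/(d:ℝ)))
          + (s/(d:ℝ)*((1-s)/(d:ℝ)^2) + (1-s)/(d:ℝ)^2*((1-s)/(d:ℝ)^2)*(d:ℝ)) : ℝ)) : ℂ) := by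
            push_cast; ring
        _ = 0 := by rw [key]; push_cast; ring
  refine ⟨hH, ?_, htr, hgram, ?_⟩
  · -- sum
    have hsplit : ∑ j, F j = (∑ j : Fin (d^2), ((s / (d:ℝ)) : ℝ) • P j)
        + (∑ j : Fin (d^2), (((1 - s) / (d:ℝ)^2) : ℝ) • (1 : Matrix (Fin d) (Fin d) ℂ)) := by
      rw [← Finset.sum_add_distrib]
      exact Finset.sum_congr rfl fun j _ => hFdef j
    rw [hsplit, ← Finset.smul_sum, hPsum, Finset.sum_const, Finset.card_univ, Fintype.card_fin]
    rw [← Nat.cast_smul_eq_nsmul ℂ, ← algebraMap_smul ℂ (s/(d:ℝ)), ← algebraMap_smul ℂ ((1-s)/(d:ℝ)^2),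
      smul_smul, smul_smul, ← add_smul]
    have hc : algebraMap ℝ ℂ (s/(d:ℝ)) * (d:ℂ) + ((d^2 : ℕ):ℂ) * algebraMap ℝ ℂ ((1-s)/(d:ℝ)^2) = 1 := by
      simp only [Complex.coe_algebraMap]
      push_cast
      field_simp
      ring
    rw [hc, one_smul]
  · -- linear independence
    rw [Fintype.linearIndependent_iff]
    intro g hg k
    have h0 : ((∑ i, g i • F i) * F k).trace = 0 := by rw [hg]; simp
    rw [Finset.sum_mul] at h0
    simp only [Matrix.smul_mul, Matrix.trace_sum, Matrix.trace_smul] at h0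
    simp only [hgram, smul_eq_mul, Complex.real_smul] at h0
    rw [Finset.sum_eq_single k] at h0
    · simp only [if_pos rfl] at h0
      rcases mul_eq_zero.mp h0 with h | h
      · exact_mod_cast h
      · exact absurd h (inv_ne_zero hdC)
    · intro b _ hb
      rw [if_neg hb, mul_zero]
    · intro h; exact absurd (Finset.mem_univ k) h
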